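/- Let H be a hypergraph and let h₁, h₂ be two distinct acyclic orientations of H. Then there exists a hyperedge e ∈ 𝓔 such that h₁(e) ≠ h₂(e) and the ordered pair (h₁(e), h₂(e)) is flippable in h₁. -/

import Mathlib

/-!
A hypergraph on vertex type `V` is given by a finite collection `𝓔` of nonempty
hyperedges (finsets of `V`).  An orientation assigns to each hyperedge a head
belonging to it.  `Arc 𝓔 h u v` is the arc relation of the digraph `D_h`, and an
orientation is acyclic if `D_h` has no directed cycle.  `flip 𝓔 h u v` is the
orientation `h^{(u,v)}`, and `(u, v)` is flippable in `h` if `h^{(u,v)}` is acyclic.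
-/

namespace PaperFlip

variable {V : Type*} [DecidableEq V]

/-- The hyperedges of a hypergraph, viewed as a subtype. -/
abbrev Edge (𝓔 : Finset (Finset V)) := {e : Finset V // e ∈ 𝓔}

/-- `h` is an orientation: the head of every hyperedge belongs to it. -/
def IsOrientation (𝓔 : Finset (Finset V)) (h : Edge 𝓔 → V) : Prop :=
  ∀ e : Edge 𝓔, h e ∈ e.1

/-- The arc relation of the digraph `D_h`: there is an arc from `u` to `v` iff some
hyperedge `e` has head `v` and contains `u` as a different vertex. -/
def Arc (𝓔 : Finset (Finset V)) (h : Edge 𝓔 → V) (u v : V) : Prop :=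
  ∃ e : Edge 𝓔, h e = v ∧ u ∈ e.1 ∧ u ≠ v

/-- An acyclic orientation: an orientation whose digraph `D_h` has no directed cycle. -/
def IsAcyclic (𝓔 : Finset (Finset V)) (h : Edge 𝓔 → V) : Prop :=
  IsOrientation 𝓔 h ∧ ∀ v : V, ¬ Relation.TransGen (Arc 𝓔 h) v v

/-- The orientation `h^{(u,v)}`: every hyperedge containing both `u` and `v` whose
head is `u` gets the new head `v`; all other heads are unchanged. -/
def flip (𝓔 : Finset (Finset V)) (h : Edge 𝓔 → V) (u v : V) : Edge 𝓔 → V :=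
  fun e => if u ∈ e.1 ∧ v ∈ e.1 ∧ h e = u then v else h e

/-- The ordered pair `(u, v)` of distinct vertices is flippable in `h` if `h^{(u,v)}`
is acyclic. -/
def Flippable (𝓔 : Finset (Finset V)) (h : Edge 𝓔 → V) (u v : V) : Prop :=
  u ≠ v ∧ IsAcyclic 𝓔 (flip 𝓔 h u v)

/-- A finite nonempty set with a transitive irreflexive relation has a "maximal"
element reaching no other element of the set. -/
lemma exists_rel_max {α : Type*} (r : α → α → Prop) (htrans : Transitive r)
    (hirr : ∀ a, ¬ r a a) (s : Finset α) (hs : s.Nonempty) :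
    ∃ a ∈ s, ∀ b ∈ s, ¬ r a b := by
  classical
  induction s using Finset.strongInduction with
  | _ s ih =>
    obtain ⟨a, ha⟩ := hs
    by_cases hmax : ∀ b ∈ s, ¬ r a b
    · exact ⟨a, ha, hmax⟩
    · push_neg at hmax
      obtain ⟨b, hb, hab⟩ := hmax
      set t := s.filter (fun x => r a x) with htdef
      have htss : t ⊂ s := Finset.filter_ssubset.mpr ⟨a, ha, hirr a⟩
      have htne : t.Nonempty := ⟨b, Finset.mem_filter.mpr ⟨hb, hab⟩⟩
      obtain ⟨a', ha't, hmax'⟩ := ih t htss htne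
      refine ⟨a', Finset.mem_of_subset htss.subset ha't, fun c hc hrc => ?_⟩
      have hac : r a a' := (Finset.mem_filter.mp ha't).2
      exact hmax' c (Finset.mem_filter.mpr ⟨hc, htrans hac hrc⟩) hrc

/-- If `h₁ ≠ h₂` are acyclic orientations of a hypergraph `H`, then some
hyperedge `e` satisfies `h₁ e ≠ h₂ e` and `(h₁ e, h₂ e)` is flippable in `h₁`. -/
theorem exists_flippable_edge {V : Type*} [DecidableEq V] (𝓔 : Finset (Finset V))
    (hE : ∀ e ∈ 𝓔, e.Nonempty) (h₁ h₂ : Edge 𝓔 → V)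
    (hh₁ : IsAcyclic 𝓔 h₁) (hh₂ : IsAcyclic 𝓔 h₂) (hne : h₁ ≠ h₂) :
    ∃ e : Edge 𝓔, h₁ e ≠ h₂ e ∧ Flippable 𝓔 h₁ (h₁ e) (h₂ e) := by
  classical
  set R₁ := Relation.TransGen (Arc 𝓔 h₁) with hR₁def
  set R₂ := Relation.TransGen (Arc 𝓔 h₂) with hR₂def
  have hR₁trans : Transitive R₁ := fun _ _ _ h h' => h.trans h'
  have hR₂trans : Transitive R₂ := fun _ _ _ h h' => h.trans h'
  -- the set of h₂-heads of disagreement edges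
  set S : Finset V := (Finset.univ.filter (fun e : Edge 𝓔 => h₁ e ≠ h₂ e)).image h₂
    with hSdef
  have hSne : S.Nonempty := by
    have : ∃ e : Edge 𝓔, h₁ e ≠ h₂ e := by
      by_contra hcon
      push_neg at hcon
      exact hne (funext hcon)
    obtain ⟨e, he⟩ := this
    exact ⟨h₂ e, Finset.mem_image.mpr ⟨e, Finset.mem_filter.mpr ⟨Finset.mem_univ _, he⟩, rfl⟩⟩
  obtain ⟨v, hvS, hvmax⟩ := exists_rel_max R₂ hR₂trans (hh₂.2) S hSne
  -- the set of h₁-heads of disagreement edges whose h₂-head is v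
  set U : Finset V := (Finset.univ.filter (fun e : Edge 𝓔 => h₁ e ≠ h₂ e ∧ h₂ e = v)).image h₁
    with hUdef
  have hUne : U.Nonempty := by
    obtain ⟨f₀, hf₀mem, hf₀⟩ := Finset.mem_image.mp hvS
    exact ⟨h₁ f₀, Finset.mem_image.mpr ⟨f₀, Finset.mem_filter.mpr
      ⟨Finset.mem_univ _, (Finset.mem_filter.mp hf₀mem).2, hf₀⟩, rfl⟩⟩
  obtain ⟨u, huU, humax⟩ := exists_rel_max (fun a b => R₁ b a)
    (fun _ _ _ h h' => h'.trans h) (hh₁.2) U hUne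
  obtain ⟨f, hfmem, hf1⟩ := Finset.mem_image.mp huU
  obtain ⟨hfD, hf2⟩ := (Finset.mem_filter.mp hfmem).2
  have huv : u ≠ v := by rw [← hf1, ← hf2]; exact hfD
  have hufmem : u ∈ f.1 := hf1 ▸ hh₁.1 f
  have hvfmem : v ∈ f.1 := hf2 ▸ hh₂.1 f
  have hArc2uv : Arc 𝓔 h₂ u v := ⟨f, hf2, hufmem, huv⟩
  have hmemS : ∀ g : Edge 𝓔, h₁ g ≠ h₂ g → h₂ g ∈ S := fun g hg =>
    Finset.mem_image.mpr ⟨g, Finset.mem_filter.mpr ⟨Finset.mem_univ _, hg⟩, rfl⟩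
  have hmemU : ∀ g : Edge 𝓔, h₁ g ≠ h₂ g → h₂ g = v → h₁ g ∈ U := fun g hg hg2 =>
    Finset.mem_image.mpr ⟨g, Finset.mem_filter.mpr ⟨Finset.mem_univ _, hg, hg2⟩, rfl⟩
  -- L1 : disagreement edges containing v have h₂-head v
  have L1 : ∀ g : Edge 𝓔, v ∈ g.1 → h₁ g ≠ h₂ g → h₂ g = v := by
    intro g hvg hgD
    by_contra hcon
    exact hvmax (h₂ g) (hmemS g hgD)
      (Relation.TransGen.single ⟨g, rfl, hvg, fun h => hcon h.symm⟩)
  -- L2 : flipped edges have h₂-head v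
  have L2 : ∀ g : Edge 𝓔, h₁ g = u → v ∈ g.1 → h₂ g = v := by
    intro g hg1 hvg
    by_cases hgD : h₁ g = h₂ g
    · exfalso
      have harc : Arc 𝓔 h₂ v u := ⟨g, by rw [← hgD, hg1], hvg, huv.symm⟩
      exact hh₂.2 u ((Relation.TransGen.single harc).head hArc2uv)
    · exact L1 g hvg hgD
  set h' := flip 𝓔 h₁ u v with h'def
  -- the auxiliary relation K dominating the arcs of h'
  set K : V → V → Prop := fun a b =>
      (b ≠ u ∧ Arc 𝓔 h₁ a b) ∨
      (b = u ∧ ∃ g : Edge 𝓔, h₁ g = u ∧ v ∉ g.1 ∧ a ∈ g.1 ∧ a ≠ u) ∨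
      (b = v ∧ ∃ g : Edge 𝓔, h₁ g = u ∧ v ∈ g.1 ∧ a ∈ g.1 ∧ a ≠ v)
    with hKdef
  have hKarc : ∀ a b, Arc 𝓔 h' a b → K a b := by
    rintro a b ⟨g, hg, hag, hab⟩
    by_cases hflip : u ∈ g.1 ∧ v ∈ g.1 ∧ h₁ g = u
    · have hb : b = v := by rw [← hg]; simp [h'def, flip, hflip]
      exact Or.inr (Or.inr ⟨hb, g, hflip.2.2, hflip.2.1, hag, hb ▸ hab⟩)
    · have hb : h₁ g = b := by rw [← hg]; simp [h'def, flip, hflip]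
      by_cases hbu : b = u
      · refine Or.inr (Or.inl ⟨hbu, g, hb.trans hbu, ?_, hag, hbu ▸ hab⟩)
        intro hvg
        exact hflip ⟨(hb.trans hbu) ▸ hh₁.1 g, hvg, hb.trans hbu⟩
      · exact Or.inl ⟨hbu, g, hb, hag, hab⟩
  have hKR1 : ∀ a b, K a b →
      (b = v ∧ ∃ g : Edge 𝓔, h₁ g = u ∧ v ∈ g.1 ∧ a ∈ g.1 ∧ a ≠ v) ∨ Arc 𝓔 h₁ a b := by
    rintro a b (⟨_, harc⟩ | ⟨rfl, g, hg1, _, hag, hau⟩ | h3)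
    · exact Or.inr harc
    · exact Or.inr ⟨g, hg1, hag, hau⟩
    · exact Or.inl h3
  -- the main invariant : no K-path from v back to v
  have main : ∀ b, Relation.TransGen K v b →
      b ≠ u ∧ b ≠ v ∧
      ((R₂ v b ∧ R₁ v b) ∨
        (∃ f₁ : Edge 𝓔, h₁ f₁ ≠ h₂ f₁ ∧ h₂ f₁ = v ∧ h₁ f₁ ≠ u ∧
          Relation.ReflTransGen (Arc 𝓔 h₁) (h₁ f₁) b)) := by
    intro b htg
    induction htg with
    | @single c hvb =>
      rcases hvb with ⟨hcu, g, hgc, hvg, hvc⟩ | ⟨-, g, -, hvng, hvg, -⟩ | ⟨-, -, -, -, -, hvv⟩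
      · refine ⟨hcu, fun h => hvc h.symm, ?_⟩
        by_cases hgD : h₁ g = h₂ g
        · refine Or.inl ⟨Relation.TransGen.single ⟨g, hgD ▸ hgc, hvg, hvc⟩,
            Relation.TransGen.single ⟨g, hgc, hvg, hvc⟩⟩
        · have hg2 : h₂ g = v := L1 g hvg hgD
          exact Or.inr ⟨g, hgD, hg2, hgc ▸ hcu, hgc ▸ Relation.ReflTransGen.refl⟩
      · exact absurd hvg hvng
      · exact absurd rfl hvv
    | @tail b c hab hbc ih =>
      obtain ⟨hbu, hbv, hstate⟩ := ih
      rcases hbc with ⟨hcu, g, hgc, hbg, hbc'⟩ | ⟨hcu', g, hg1, hvng, hbg, hbu'⟩ |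
        ⟨hcv', g, hg1, hvg, hbg, hbv'⟩
      · -- ordinary h₁-arc b → c, c ≠ u
        by_cases hcv : c = v
        · exfalso
          have harcbv : Arc 𝓔 h₁ b v := ⟨g, hgc.trans hcv, hbg, hbv⟩
          rcases hstate with ⟨-, hR1vb⟩ | ⟨f₁, hf₁D, hf₁2, hf₁u, hrtg⟩
          · exact hh₁.2 v (hR1vb.tail harcbv)
          · have hR1f₁v : R₁ (h₁ f₁) v := Relation.TransGen.tail' hrtg harcbv
            have hvf₁ : v ∈ f₁.1 := hf₁2 ▸ hh₂.1 f₁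
            have hne' : v ≠ h₁ f₁ := fun h => hf₁D (h ▸ hf₁2).symm
            exact hh₁.2 v ((Relation.TransGen.single ⟨f₁, rfl, hvf₁, hne'⟩).trans hR1f₁v)
        · refine ⟨hcu, hcv, ?_⟩
          rcases hstate with ⟨hR2vb, hR1vb⟩ | ⟨f₁, hf₁D, hf₁2, hf₁u, hrtg⟩
          · by_cases hgD : h₁ g = h₂ g
            · exact Or.inl ⟨hR2vb.tail ⟨g, hgD ▸ hgc, hbg, hbc'⟩,
                hR1vb.tail ⟨g, hgc, hbg, hbc'⟩⟩
            · exfalso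
              by_cases hbw : b = h₂ g
              · exact hvmax (h₂ g) (hmemS g hgD) (hbw ▸ hR2vb)
              · exact hvmax (h₂ g) (hmemS g hgD) (hR2vb.tail ⟨g, rfl, hbg, hbw⟩)
          · exact Or.inr ⟨f₁, hf₁D, hf₁2, hf₁u, hrtg.tail ⟨g, hgc, hbg, hbc'⟩⟩
      · -- arc into u via a v-free edge : contradiction
        exfalso
        rcases hstate with ⟨hR2vb, -⟩ | ⟨f₁, hf₁D, hf₁2, hf₁u, hrtg⟩
        · by_cases hgD : h₁ g = h₂ g
          · have hR2vu : R₂ v u := hR2vb.tail ⟨g, by rw [← hgD, hg1], hbg, hbu⟩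
            exact hh₂.2 v (hR2vu.tail hArc2uv)
          · by_cases hbw : b = h₂ g
            · exact hvmax (h₂ g) (hmemS g hgD) (hbw ▸ hR2vb)
            · exact hvmax (h₂ g) (hmemS g hgD) (hR2vb.tail ⟨g, rfl, hbg, hbw⟩)
        · exact humax (h₁ f₁) (hmemU f₁ hf₁D hf₁2)
            (Relation.TransGen.tail' hrtg ⟨g, hg1, hbg, hbu⟩)
      · -- arc into v via a flipped edge : contradiction
        exfalso
        rcases hstate with ⟨hR2vb, -⟩ | ⟨f₁, hf₁D, hf₁2, hf₁u, hrtg⟩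
        · have hg2 : h₂ g = v := L2 g hg1 hvg
          exact hh₂.2 v (hR2vb.tail ⟨g, hg2, hbg, hbv⟩)
        · exact humax (h₁ f₁) (hmemU f₁ hf₁D hf₁2)
            (Relation.TransGen.tail' hrtg ⟨g, hg1, hbg, hbu⟩)
  have noKvv : ¬ Relation.TransGen K v v := fun h => (main v h).2.1 rfl
  -- any K-cycle yields either an h₁-cycle or a K-cycle through v
  have good : ∀ a b, Relation.TransGen K a b →
      (Relation.TransGen (Arc 𝓔 h₁) a b ∧ Relation.ReflTransGen K a b) ∨
      (Relation.ReflTransGen K a v ∧ Relation.ReflTransGen K v b) := by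
    intro a b htg
    induction htg with
    | single hab =>
      rename_i c
      rcases hKR1 _ _ hab with ⟨rfl, -⟩ | harc
      · exact Or.inr ⟨Relation.ReflTransGen.single hab, Relation.ReflTransGen.refl⟩
      · exact Or.inl ⟨Relation.TransGen.single harc, Relation.ReflTransGen.single hab⟩
    | @tail b c htg hbc ih =>
      rcases ih with ⟨htg1, hrtg⟩ | ⟨hav, hvb⟩
      · rcases hKR1 _ _ hbc with ⟨rfl, -⟩ | harc
        · exact Or.inr ⟨hrtg.tail hbc, Relation.ReflTransGen.refl⟩
        · exact Or.inl ⟨htg1.tail harc, hrtg.tail hbc⟩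
      · exact Or.inr ⟨hav, hvb.tail hbc⟩
  have hacyc : IsAcyclic 𝓔 h' := by
    constructor
    · intro g
      by_cases hflip : u ∈ g.1 ∧ v ∈ g.1 ∧ h₁ g = u
      · simpa [h'def, flip, hflip] using hflip.2.1
      · simpa [h'def, flip, hflip] using hh₁.1 g
    · intro z hz
      have hzK : Relation.TransGen K z z := Relation.TransGen.mono hKarc z z hz
      rcases good z z hzK with ⟨htg1, -⟩ | ⟨hzv, hvz⟩
      · exact hh₁.2 z htg1
      · rcases Relation.reflTransGen_iff_eq_or_transGen.mp hvz with rfl | htgvz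
        · exact noKvv hzK
        · rcases Relation.reflTransGen_iff_eq_or_transGen.mp hzv with rfl | htgzv
          · exact noKvv htgvz
          · exact noKvv (htgvz.trans htgzv)
  exact ⟨f, hfD, by rw [hf1, hf2]; exact ⟨huv, hacyc⟩⟩


end PaperFlip
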